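/- Let s ∈ ℝ. Let X, Y, Z be real-valued random variables on a probability space with X + Y = Z almost surely and X ≥ s almost surely. Let Y', Z' be real-valued random variables on a (possibly different) probability space with s + Y' = Z' almost surely. If Y has the same distribution as Y' and Z has the same distribution as Z', then X = s almost surely. -/

import Mathlib

open MeasureTheory

/-- If `X + Y = Z` a.s. and `X ≥ s` a.s. on one probability space, `s + Y' = Z'` a.s.
on another, and `Y ≍ Y'`, `Z ≍ Z'` in distribution, then `X = s` a.s. -/
theorem stmt_5 {Ω Ω' : Type*} [MeasurableSpace Ω] [MeasurableSpace Ω']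
    (P : Measure Ω) [IsProbabilityMeasure P] (P' : Measure Ω') [IsProbabilityMeasure P']
    (s : ℝ) (X Y Z : Ω → ℝ) (Y' Z' : Ω' → ℝ)
    (hX : Measurable X) (hY : Measurable Y) (hZ : Measurable Z)
    (hY' : Measurable Y') (hZ' : Measurable Z')
    (hXYZ : ∀ᵐ ω ∂P, X ω + Y ω = Z ω)
    (hXs : ∀ᵐ ω ∂P, s ≤ X ω)
    (hYZ' : ∀ᵐ ω ∂P', s + Y' ω = Z' ω)
    (hYY' : P.map Y = P'.map Y')
    (hZZ' : P.map Z = P'.map Z') :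
    ∀ᵐ ω ∂P, X ω = s := by
  -- a.e., s + Y ≤ Z
  have hle : ∀ᵐ ω ∂P, s + Y ω ≤ Z ω := by
    filter_upwards [hXYZ, hXs] with ω h1 h2
    linarith
  -- For each rational q, {Z ≤ q} =ᵐ {s + Y ≤ q}
  have key : ∀ q : ℚ, {ω | Z ω ≤ (q : ℝ)} =ᵐ[P] {ω | s + Y ω ≤ (q : ℝ)} := by
    intro q
    have hA : P {ω | Z ω ≤ (q : ℝ)} = P' {ω | Z' ω ≤ (q : ℝ)} := by
      have h0 := congrArg (fun μ : Measure ℝ => μ (Set.Iic (q : ℝ))) hZZ'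
      simp only [Measure.map_apply hZ measurableSet_Iic,
        Measure.map_apply hZ' measurableSet_Iic] at h0
      simpa [Set.preimage, Set.Iic] using h0
    have hB : P' {ω | Z' ω ≤ (q : ℝ)} = P' {ω | s + Y' ω ≤ (q : ℝ)} := by
      apply measure_congr
      filter_upwards [hYZ'] with ω h
      exact congrArg (fun t => t ≤ (q : ℝ)) h.symm
    have hC : P' {ω | s + Y' ω ≤ (q : ℝ)} = P {ω | s + Y ω ≤ (q : ℝ)} := by
      have h1 : {ω | s + Y' ω ≤ (q : ℝ)} = Y' ⁻¹' Set.Iic ((q : ℝ) - s) := by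
        ext ω; simp [Set.mem_setOf_eq]; constructor <;> intro <;> linarith
      have h2 : {ω | s + Y ω ≤ (q : ℝ)} = Y ⁻¹' Set.Iic ((q : ℝ) - s) := by
        ext ω; simp [Set.mem_setOf_eq]; constructor <;> intro <;> linarith
      rw [h1, h2, ← Measure.map_apply hY' measurableSet_Iic,
        ← Measure.map_apply hY measurableSet_Iic, hYY']
    have hmeas : P {ω | Z ω ≤ (q : ℝ)} = P {ω | s + Y ω ≤ (q : ℝ)} := by
      rw [hA, hB, hC]
    have hsub : {ω | Z ω ≤ (q : ℝ)} ≤ᵐ[P] {ω | s + Y ω ≤ (q : ℝ)} := by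
      filter_upwards [hle] with ω h hq
      exact le_trans h hq
    exact ae_eq_of_ae_subset_of_measure_ge hsub (le_of_eq hmeas.symm)
      ((hZ measurableSet_Iic).nullMeasurableSet) (measure_ne_top P _)
  -- combine over all rationals
  have hall : ∀ᵐ ω ∂P, ∀ q : ℚ, Z ω ≤ (q : ℝ) ↔ s + Y ω ≤ (q : ℝ) := by
    rw [ae_all_iff]
    intro q
    filter_upwards [key q] with ω h
    exact Iff.of_eq h
  filter_upwards [hall, hle, hXYZ, hXs] with ω h hle' hz hs
  by_contra hne
  have hx : s < X ω := lt_of_le_of_ne hs (Ne.symm hne)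
  have hlt : s + Y ω < Z ω := by linarith
  obtain ⟨q, hq1, hq2⟩ := exists_rat_btwn hlt
  exact absurd ((h q).mpr hq1.le) (not_le.mpr hq2)
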